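/- Let n and k be positive integers, z a k-coloring of {1,…,n}, and K a field. For every nonzero γ ∈ ker_ℤ DC_{n,z}, setting f = x^{γ⁺} − x^{γ⁻}, there exist f' ∈ I_{M_{n,z}} and γ'' ∈ ker_ℤ DC_{n,z} such that, with f'' = x^{γ''⁺} − x^{γ''⁻}, one has f = f' + f'', deg(f'') = deg(f), and there exist vertices u, v, w ∈ {1,…,n} with z(u) = z(w) such that γ''_{uv} and γ''_{vw} are both nonzero and of opposite signs. -/

import Mathlib

open Finset

/-- The set `P` of 2-element subsets of `{1,…,n}`, encoded as ordered pairs. -/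
abbrev Edge (n : ℕ) : Type := {p : Fin n × Fin n // p.1 < p.2}

/-- Entry `γ_{uv}` of a vector `γ ∈ ℤ^P` at the unordered pair `{u,v}` (0 when `u = v`). -/
def ent {n : ℕ} (γ : Edge n → ℤ) (u v : Fin n) : ℤ :=
  if h : u < v then γ ⟨(u, v), h⟩ else if h : v < u then γ ⟨(v, u), h⟩ else 0

/-- Entry at `{u,v}` of a vector in `ℕ^P`. -/
def entN {n : ℕ} (x : Edge n → ℕ) (u v : Fin n) : ℕ :=
  if h : u < v then x ⟨(u, v), h⟩ else if h : v < u then x ⟨(v, u), h⟩ else 0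

/-- Degree sequence: `d(γ)_u = ∑_{v ≠ u} γ_{uv}`. -/
def degSeq {n : ℕ} (γ : Edge n → ℤ) (u : Fin n) : ℤ := ∑ v, ent γ u v

/-- Color sequence: `c(γ)_{ij} = ∑ γ_{uv}` over `{u,v} ∈ P` with `{z u, z v} = {i,j}`. -/
def colorSeq {n k : ℕ} (z : Fin n → Fin k) (γ : Edge n → ℤ) (i j : Fin k) : ℤ :=
  ∑ e : Edge n,
    if (z e.1.1 = i ∧ z e.1.2 = j) ∨ (z e.1.1 = j ∧ z e.1.2 = i) then γ e else 0

/-- `γ ∈ ker_ℤ DC_{n,z}`: both the degree sequence and the color sequence vanish. -/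
def inKer {n k : ℕ} (z : Fin n → Fin k) (γ : Edge n → ℤ) : Prop :=
  (∀ u, degSeq γ u = 0) ∧ ∀ i j, colorSeq z γ i j = 0

/-- The 1-norm `‖γ‖₁ = ∑_{e ∈ P} |γ_e|`. -/
def norm1 {n : ℕ} (γ : Edge n → ℤ) : ℤ := ∑ e, |γ e|

/-- The set of moves `M_{n,z} = {γ ∈ ker_ℤ DC_{n,z} : ‖γ‖₁ = 4}`. -/
def MSet {n k : ℕ} (z : Fin n → Fin k) : Set (Edge n → ℤ) :=
  {γ | inKer z γ ∧ norm1 γ = 4}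

/-- Degree sequence of a vector in `ℕ^P`. -/
def degSeqN {n : ℕ} (x : Edge n → ℕ) (u : Fin n) : ℕ := ∑ v, entN x u v

/-- Color sequence of a vector in `ℕ^P`. -/
def colorSeqN {n k : ℕ} (z : Fin n → Fin k) (x : Edge n → ℕ) (i j : Fin k) : ℕ :=
  ∑ e : Edge n,
    if (z e.1.1 = i ∧ z e.1.2 = j) ∨ (z e.1.1 = j ∧ z e.1.2 = i) then x e else 0

/-- The fiber `F(b) = {x ∈ ℕ^P : DC_{n,z} x = b}`, where `b = (d; c)`. -/
def Fiber {n k : ℕ} (z : Fin n → Fin k) (d : Fin n → ℤ) (c : Fin k → Fin k → ℤ) :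
    Set (Edge n → ℕ) :=
  {x | (∀ u, (degSeqN x u : ℤ) = d u) ∧ ∀ i j, (colorSeqN z x i j : ℤ) = c i j}

/-- The simple fiber `F̃(b) = F(b) ∩ {0,1}^P`. -/
def SimpleFiber {n k : ℕ} (z : Fin n → Fin k) (d : Fin n → ℤ) (c : Fin k → Fin k → ℤ) :
    Set (Edge n → ℕ) :=
  {x | x ∈ Fiber z d c ∧ ∀ e, x e ≤ 1}

/-- The difference `x − x' ∈ ℤ^P` of two vectors in `ℕ^P`. -/
def diff {n : ℕ} (x x' : Edge n → ℕ) : Edge n → ℤ := fun e => (x e : ℤ) - (x' e : ℤ)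

/-- The monomial map `φ_β : x_{uv} ↦ s_u s_v t_{z(u)z(v)}` defining the toric ideal. -/
noncomputable def phiBeta (K : Type*) [Field K] {n k : ℕ} (z : Fin n → Fin k) :
    MvPolynomial (Edge n) K →ₐ[K] MvPolynomial (Fin n ⊕ Fin k × Fin k) K :=
  MvPolynomial.aeval fun e =>
    MvPolynomial.X (Sum.inl e.1.1) * MvPolynomial.X (Sum.inl e.1.2) *
      MvPolynomial.X (Sum.inr (min (z e.1.1) (z e.1.2), max (z e.1.1) (z e.1.2)))

/-- The exponent vector `γ⁺ = max(γ, 0)`. -/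
noncomputable def expPos {n : ℕ} (γ : Edge n → ℤ) : Edge n →₀ ℕ :=
  Finsupp.equivFunOnFinite.symm fun e => (γ e).toNat

/-- The exponent vector `γ⁻ = max(−γ, 0)`. -/
noncomputable def expNeg {n : ℕ} (γ : Edge n → ℤ) : Edge n →₀ ℕ :=
  Finsupp.equivFunOnFinite.symm fun e => (-γ e).toNat

/-- The binomial `x^{γ⁺} − x^{γ⁻}` associated to `γ ∈ ℤ^P`. -/
noncomputable def binom (K : Type*) [Field K] {n : ℕ} (γ : Edge n → ℤ) :
    MvPolynomial (Edge n) K :=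
  MvPolynomial.monomial (expPos γ) (1 : K) - MvPolynomial.monomial (expNeg γ) (1 : K)

/-- The variable `x_{ab}` for an unordered pair `{a,b}` with `a ≠ b`. -/
noncomputable def edgeVar (K : Type*) [Field K] {n : ℕ} (a b : Fin n) :
    MvPolynomial (Edge n) K :=
  if h : a < b then MvPolynomial.X ⟨(a, b), h⟩
  else if h : b < a then MvPolynomial.X ⟨(b, a), h⟩ else 1

section Aux1
variable {n k : ℕ}

def edg (u v : Fin n) (h : u ≠ v) : Edge n :=
  if hl : u < v then ⟨(u, v), hl⟩ else ⟨(v, u), h.lt_or_gt.resolve_left hl⟩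

lemma edg_fst {u v : Fin n} (h : u ≠ v) :
    (edg u v h).1 = (u, v) ∨ (edg u v h).1 = (v, u) := by
  unfold edg; split_ifs <;> simp

lemma ent_edg (γ : Edge n → ℤ) {u v : Fin n} (h : u ≠ v) : γ (edg u v h) = ent γ u v := by
  unfold edg ent
  rcases h.lt_or_gt with hl | hl
  · rw [dif_pos hl, dif_pos hl]
  · rw [dif_neg (asymm hl), dif_neg (asymm hl), dif_pos hl]

lemma ent_self (γ : Edge n → ℤ) (u : Fin n) : ent γ u u = 0 := by
  unfold ent; rw [dif_neg (lt_irrefl u), dif_neg (lt_irrefl u)]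

lemma ent_symm (γ : Edge n → ℤ) (u v : Fin n) : ent γ u v = ent γ v u := by
  unfold ent
  rcases lt_trichotomy u v with hl | rfl | hl
  · rw [dif_pos hl, dif_neg (asymm hl), dif_pos hl]
  · rfl
  · rw [dif_neg (asymm hl), dif_pos hl, dif_pos hl]

lemma ent_val (γ : Edge n → ℤ) (e : Edge n) : ent γ e.1.1 e.1.2 = γ e := by
  unfold ent; rw [dif_pos e.2]

lemma eq_of_edg_eq {a b c d : Fin n} {h1 : a ≠ b} {h2 : c ≠ d} (h : edg a b h1 = edg c d h2) :
    (a = c ∧ b = d) ∨ (a = d ∧ b = c) := by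
  have hv := congrArg Subtype.val h
  rcases edg_fst h1 with h3 | h3 <;> rcases edg_fst h2 with h4 | h4 <;>
    rw [h3, h4, Prod.mk.injEq] at hv <;> tauto

lemma edg_ne {a b c d : Fin n} {h1 : a ≠ b} {h2 : c ≠ d}
    (h : ¬((a = c ∧ b = d) ∨ (a = d ∧ b = c))) : edg a b h1 ≠ edg c d h2 :=
  fun he => h (eq_of_edg_eq he)

def chi (a b : Fin n) : Edge n → ℤ := fun e =>
  if (e.1.1 = a ∧ e.1.2 = b) ∨ (e.1.1 = b ∧ e.1.2 = a) then 1 else 0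

lemma chi_apply {a b : Fin n} (h : a ≠ b) (e : Edge n) :
    chi a b e = if e = edg a b h then 1 else 0 := by
  obtain ⟨⟨x, y⟩, hxy⟩ := e
  have hiff : ((x = a ∧ y = b) ∨ (x = b ∧ y = a)) ↔ (⟨(x, y), hxy⟩ : Edge n) = edg a b h := by
    unfold edg
    split_ifs with hl
    · simp only [Subtype.mk.injEq, Prod.mk.injEq]
      constructor
      · rintro (⟨rfl, rfl⟩ | ⟨rfl, rfl⟩)
        · exact ⟨rfl, rfl⟩
        · exact absurd hxy (asymm hl)
      · rintro ⟨rfl, rfl⟩; exact Or.inl ⟨rfl, rfl⟩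
    · have hl' : b < a := h.lt_or_gt.resolve_left hl
      simp only [Subtype.mk.injEq, Prod.mk.injEq]
      constructor
      · rintro (⟨rfl, rfl⟩ | ⟨rfl, rfl⟩)
        · exact absurd hxy (asymm hl')
        · exact ⟨rfl, rfl⟩
      · rintro ⟨rfl, rfl⟩; exact Or.inr ⟨rfl, rfl⟩
  simp only [chi]
  rw [if_congr hiff rfl rfl]

lemma ent_chi {a b : Fin n} (h : a ≠ b) (u v : Fin n) :
    ent (chi a b) u v = if (u = a ∧ v = b) ∨ (u = b ∧ v = a) then 1 else 0 := by
  unfold ent chi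
  rcases lt_trichotomy u v with hl | rfl | hl
  · rw [dif_pos hl]
  · rw [dif_neg (lt_irrefl u), dif_neg (lt_irrefl u)]
    have hn : ¬((u = a ∧ u = b) ∨ (u = b ∧ u = a)) := by
      rintro (⟨rfl, rfl⟩ | ⟨rfl, rfl⟩) <;> exact h rfl
    rw [if_neg hn]
  · rw [dif_neg (asymm hl), dif_pos hl]
    exact if_congr (by tauto) rfl rfl

lemma sum_chi {a b : Fin n} (h : a ≠ b) : ∑ e, chi a b e = 1 := by
  simp [chi_apply h]

end Aux1

section Aux2
variable {n k : ℕ}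

def mv (a b c d : Fin n) : Edge n → ℤ := fun e =>
  chi a b e + chi c d e - chi a c e - chi b d e

lemma ent_mv (a b c d u v : Fin n) :
    ent (mv a b c d) u v
      = ent (chi a b) u v + ent (chi c d) u v - ent (chi a c) u v - ent (chi b d) u v := by
  unfold mv ent
  rcases lt_trichotomy u v with hl | rfl | hl
  · simp only [dif_pos hl]
  · simp only [dif_neg (lt_irrefl u)]; norm_num
  · simp only [dif_neg (asymm hl), dif_pos hl]

lemma ent_add (f g : Edge n → ℤ) (u v : Fin n) :
    ent (fun e => f e + g e) u v = ent f u v + ent g u v := by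
  unfold ent
  rcases lt_trichotomy u v with hl | rfl | hl
  · simp only [dif_pos hl]
  · simp only [dif_neg (lt_irrefl u)]; norm_num
  · simp only [dif_neg (asymm hl), dif_pos hl]

lemma ent_sub (f g : Edge n → ℤ) (u v : Fin n) :
    ent (fun e => f e - g e) u v = ent f u v - ent g u v := by
  unfold ent
  rcases lt_trichotomy u v with hl | rfl | hl
  · simp only [dif_pos hl]
  · simp only [dif_neg (lt_irrefl u)]; norm_num
  · simp only [dif_neg (asymm hl), dif_pos hl]

lemma degSeq_add (f g : Edge n → ℤ) (u : Fin n) :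
    degSeq (fun e => f e + g e) u = degSeq f u + degSeq g u := by
  unfold degSeq
  rw [← Finset.sum_add_distrib]
  exact Finset.sum_congr rfl fun v _ => ent_add f g u v

lemma degSeq_sub (f g : Edge n → ℤ) (u : Fin n) :
    degSeq (fun e => f e - g e) u = degSeq f u - degSeq g u := by
  unfold degSeq
  rw [← Finset.sum_sub_distrib]
  exact Finset.sum_congr rfl fun v _ => ent_sub f g u v

lemma colorSeq_add (z : Fin n → Fin k) (f g : Edge n → ℤ) (i j : Fin k) :
    colorSeq z (fun e => f e + g e) i j = colorSeq z f i j + colorSeq z g i j := by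
  unfold colorSeq
  rw [← Finset.sum_add_distrib]
  refine Finset.sum_congr rfl fun e _ => ?_
  split_ifs <;> ring

lemma colorSeq_sub (z : Fin n → Fin k) (f g : Edge n → ℤ) (i j : Fin k) :
    colorSeq z (fun e => f e - g e) i j = colorSeq z f i j - colorSeq z g i j := by
  unfold colorSeq
  rw [← Finset.sum_sub_distrib]
  refine Finset.sum_congr rfl fun e _ => ?_
  split_ifs <;> ring

lemma inKer_add {z : Fin n → Fin k} {f g : Edge n → ℤ} (hf : inKer z f) (hg : inKer z g) :
    inKer z (fun e => f e + g e) :=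
  ⟨fun u => by rw [degSeq_add, hf.1 u, hg.1 u, add_zero],
   fun i j => by rw [colorSeq_add, hf.2 i j, hg.2 i j, add_zero]⟩

lemma inKer_sub {z : Fin n → Fin k} {f g : Edge n → ℤ} (hf : inKer z f) (hg : inKer z g) :
    inKer z (fun e => f e - g e) :=
  ⟨fun u => by rw [degSeq_sub, hf.1 u, hg.1 u, sub_zero],
   fun i j => by rw [colorSeq_sub, hf.2 i j, hg.2 i j, sub_zero]⟩

lemma degSeq_chi {a b : Fin n} (h : a ≠ b) (u : Fin n) :
    degSeq (chi a b) u = (if u = a then 1 else 0) + (if u = b then 1 else 0) := by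
  unfold degSeq
  rw [Finset.sum_congr rfl (fun v _ => ent_chi h u v)]
  by_cases ha : u = a <;> by_cases hb : u = b
  · exact absurd (ha.symm.trans hb) h
  · subst ha; simp [h, Finset.sum_ite_eq']
  · subst hb; simp [Ne.symm h, Finset.sum_ite_eq']
  · simp [ha, hb]

lemma colorSeq_chi (z : Fin n → Fin k) {a b : Fin n} (h : a ≠ b) (i j : Fin k) :
    colorSeq z (chi a b) i j = if (z a = i ∧ z b = j) ∨ (z a = j ∧ z b = i) then 1 else 0 := by
  unfold colorSeq
  have step : ∀ e : Edge n,
      (if (z e.1.1 = i ∧ z e.1.2 = j) ∨ (z e.1.1 = j ∧ z e.1.2 = i) then chi a b e else 0)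
      = if e = edg a b h then (if (z a = i ∧ z b = j) ∨ (z a = j ∧ z b = i) then 1 else 0)
        else 0 := by
    intro e
    by_cases he : e = edg a b h
    · subst he
      have hchi : chi a b (edg a b h) = 1 := by
        rw [chi_apply h]; exact if_pos rfl
      have hC : ((z (edg a b h).1.1 = i ∧ z (edg a b h).1.2 = j) ∨
          (z (edg a b h).1.1 = j ∧ z (edg a b h).1.2 = i)) ↔
          ((z a = i ∧ z b = j) ∨ (z a = j ∧ z b = i)) := by
        rcases edg_fst h with h3 | h3
        · rw [h3]
        · rw [h3]
          exact (by tauto :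
            ((z b = i ∧ z a = j) ∨ (z b = j ∧ z a = i)) ↔
              ((z a = i ∧ z b = j) ∨ (z a = j ∧ z b = i)))
      rw [hchi, if_pos (rfl : edg a b h = edg a b h)]
      exact if_congr hC rfl rfl
    · have hchi : chi a b e = 0 := by
        rw [chi_apply h]; exact if_neg he
      rw [hchi, if_neg he]
      simp
  rw [Finset.sum_congr rfl (fun e _ => step e)]
  simp [Finset.sum_ite_eq']

lemma degSeq_mv {a b c d : Fin n} (hab : a ≠ b) (hcd : c ≠ d) (hac : a ≠ c) (hbd : b ≠ d)
    (u : Fin n) : degSeq (mv a b c d) u = 0 := by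
  unfold degSeq
  rw [Finset.sum_congr rfl (fun v _ => ent_mv a b c d u v)]
  rw [Finset.sum_sub_distrib, Finset.sum_sub_distrib, Finset.sum_add_distrib]
  have h1 : (∑ v, ent (chi a b) u v) = (if u = a then 1 else 0) + (if u = b then 1 else 0) :=
    degSeq_chi hab u
  have h2 : (∑ v, ent (chi c d) u v) = (if u = c then 1 else 0) + (if u = d then 1 else 0) :=
    degSeq_chi hcd u
  have h3 : (∑ v, ent (chi a c) u v) = (if u = a then 1 else 0) + (if u = c then 1 else 0) :=
    degSeq_chi hac u
  have h4 : (∑ v, ent (chi b d) u v) = (if u = b then 1 else 0) + (if u = d then 1 else 0) :=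
    degSeq_chi hbd u
  rw [h1, h2, h3, h4]; ring

lemma colorSeq_mv (z : Fin n → Fin k) {a b c d : Fin n} (hab : a ≠ b) (hcd : c ≠ d)
    (hac : a ≠ c) (hbd : b ≠ d) (hz : z b = z c) (i j : Fin k) :
    colorSeq z (mv a b c d) i j = 0 := by
  have hsplit : ∀ e : Edge n,
      (if (z e.1.1 = i ∧ z e.1.2 = j) ∨ (z e.1.1 = j ∧ z e.1.2 = i) then mv a b c d e else 0)
      = (if (z e.1.1 = i ∧ z e.1.2 = j) ∨ (z e.1.1 = j ∧ z e.1.2 = i) then chi a b e else 0)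
        + (if (z e.1.1 = i ∧ z e.1.2 = j) ∨ (z e.1.1 = j ∧ z e.1.2 = i) then chi c d e else 0)
        - (if (z e.1.1 = i ∧ z e.1.2 = j) ∨ (z e.1.1 = j ∧ z e.1.2 = i) then chi a c e else 0)
        - (if (z e.1.1 = i ∧ z e.1.2 = j) ∨ (z e.1.1 = j ∧ z e.1.2 = i) then chi b d e else 0) := by
    intro e
    simp only [mv]
    split_ifs <;> ring
  unfold colorSeq
  rw [Finset.sum_congr rfl (fun e _ => hsplit e)]
  rw [Finset.sum_sub_distrib, Finset.sum_sub_distrib, Finset.sum_add_distrib]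
  have h1 := colorSeq_chi z hab i j
  have h2 := colorSeq_chi z hcd i j
  have h3 := colorSeq_chi z hac i j
  have h4 := colorSeq_chi z hbd i j
  unfold colorSeq at h1 h2 h3 h4
  rw [h1, h2, h3, h4]
  simp only [hz]
  ring

lemma sum_mv {a b c d : Fin n} (hab : a ≠ b) (hcd : c ≠ d) (hac : a ≠ c) (hbd : b ≠ d) :
    ∑ e, mv a b c d e = 0 := by
  unfold mv
  rw [Finset.sum_sub_distrib, Finset.sum_sub_distrib, Finset.sum_add_distrib,
    sum_chi hab, sum_chi hcd, sum_chi hac, sum_chi hbd]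
  norm_num

lemma norm1_mv {a b c d : Fin n} (hab : a ≠ b) (hcd : c ≠ d) (hac : a ≠ c) (hbd : b ≠ d)
    (had : a ≠ d) (hbc : b ≠ c) : norm1 (mv a b c d) = 4 := by
  have n12 : edg a b hab ≠ edg c d hcd :=
    edg_ne (by rintro (⟨h, _⟩ | ⟨h, _⟩); exacts [hac h, had h])
  have n13 : edg a b hab ≠ edg a c hac :=
    edg_ne (by rintro (⟨_, h⟩ | ⟨h, _⟩); exacts [hbc h, hac h])
  have n14 : edg a b hab ≠ edg b d hbd :=
    edg_ne (by rintro (⟨h, _⟩ | ⟨h, _⟩); exacts [hab h, had h])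
  have n23 : edg c d hcd ≠ edg a c hac :=
    edg_ne (by rintro (⟨h, _⟩ | ⟨_, h⟩); exacts [hac h.symm, had h.symm])
  have n24 : edg c d hcd ≠ edg b d hbd :=
    edg_ne (by rintro (⟨h, _⟩ | ⟨h, _⟩); exacts [hbc h.symm, hcd h])
  have n34 : edg a c hac ≠ edg b d hbd :=
    edg_ne (by rintro (⟨h, _⟩ | ⟨h, _⟩); exacts [hab h, had h])
  have key : ∀ e, |mv a b c d e| = chi a b e + chi c d e + chi a c e + chi b d e := by
    intro e
    simp only [mv]
    rw [chi_apply hab e, chi_apply hcd e, chi_apply hac e, chi_apply hbd e]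
    by_cases h1 : e = edg a b hab
    · subst h1
      rw [if_pos rfl, if_neg n12, if_neg n13, if_neg n14]; norm_num
    rw [if_neg h1]
    by_cases h2 : e = edg c d hcd
    · subst h2
      rw [if_pos rfl, if_neg n23, if_neg n24]; norm_num
    rw [if_neg h2]
    by_cases h3 : e = edg a c hac
    · subst h3
      rw [if_pos rfl, if_neg n34]; norm_num
    rw [if_neg h3]
    by_cases h4 : e = edg b d hbd
    · subst h4; rw [if_pos rfl]; norm_num
    rw [if_neg h4]; norm_num
  unfold norm1
  rw [Finset.sum_congr rfl (fun e _ => key e)]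
  rw [Finset.sum_add_distrib, Finset.sum_add_distrib, Finset.sum_add_distrib,
    sum_chi hab, sum_chi hcd, sum_chi hac, sum_chi hbd]
  norm_num

lemma mv_mem (z : Fin n → Fin k) {a b c d : Fin n}
    (hab : a ≠ b) (hcd : c ≠ d) (hac : a ≠ c) (hbd : b ≠ d) (had : a ≠ d) (hbc : b ≠ c)
    (hz : z b = z c) : mv a b c d ∈ MSet z :=
  ⟨⟨degSeq_mv hab hcd hac hbd, colorSeq_mv z hab hcd hac hbd hz⟩,
    norm1_mv hab hcd hac hbd had hbc⟩

end Aux2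

section Aux3
variable {n k : ℕ}

lemma expPos_apply (γ : Edge n → ℤ) (e : Edge n) : expPos γ e = (γ e).toNat := by
  simp [expPos]

lemma expNeg_apply (γ : Edge n → ℤ) (e : Edge n) : expNeg γ e = (-γ e).toNat := by
  simp [expNeg]

lemma binom_neg (K : Type*) [Field K] (γ : Edge n → ℤ) :
    binom K (fun e => -γ e) = -(binom K γ) := by
  unfold binom
  have h1 : expPos (fun e => -γ e) = expNeg γ := rfl
  have h2 : expNeg (fun e => -γ e) = expPos γ := by
    unfold expPos expNeg
    congr 1
    funext e
    rw [neg_neg]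
  rw [h1, h2]
  ring

lemma exists_neg_term {α : Type*} [Fintype α] {f : α → ℤ} (h0 : ∑ x, f x = 0) {a : α}
    (ha : 0 < f a) : ∃ b, f b < 0 := by
  by_contra hc
  push_neg at hc
  have h1 : ∑ x, (fun _ => (0 : ℤ)) x < ∑ x, f x :=
    Finset.sum_lt_sum (fun i _ => hc i) ⟨a, Finset.mem_univ a, ha⟩
  simp [h0] at h1

lemma exists_pos_term {α : Type*} [Fintype α] {f : α → ℤ} (h0 : ∑ x, f x = 0) {a : α}
    (ha : f a < 0) : ∃ b, 0 < f b := by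
  by_contra hc
  push_neg at hc
  have h1 : ∑ x, f x < ∑ x, (fun _ => (0 : ℤ)) x :=
    Finset.sum_lt_sum (fun i _ => hc i) ⟨a, Finset.mem_univ a, ha⟩
  simp [h0] at h1

lemma totalDegree_binom (K : Type*) [Field K] (κ : Edge n → ℤ) (hκ : ∃ e, κ e ≠ 0) :
    (binom K κ).totalDegree = max (∑ e, (κ e).toNat) (∑ e, (-κ e).toNat) := by
  obtain ⟨e0, he0⟩ := hκ
  have hne : expPos κ ≠ expNeg κ := by
    intro h
    have h2 := DFunLike.congr_fun h e0
    rw [expPos_apply, expNeg_apply] at h2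
    omega
  have hsp : ((expPos κ).sum fun _ m => m) = ∑ e, (κ e).toNat := by
    rw [Finsupp.sum_fintype _ _ (fun i => rfl)]
    exact Finset.sum_congr rfl fun e _ => expPos_apply κ e
  have hsn : ((expNeg κ).sum fun _ m => m) = ∑ e, (-κ e).toNat := by
    rw [Finsupp.sum_fintype _ _ (fun i => rfl)]
    exact Finset.sum_congr rfl fun e _ => expNeg_apply κ e
  unfold binom
  apply le_antisymm
  · calc (MvPolynomial.monomial (expPos κ) (1 : K)
          - MvPolynomial.monomial (expNeg κ) (1 : K)).totalDegree
        = (MvPolynomial.monomial (expPos κ) (1 : K)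
          + -MvPolynomial.monomial (expNeg κ) (1 : K)).totalDegree := by rw [sub_eq_add_neg]
      _ ≤ max (MvPolynomial.monomial (expPos κ) (1 : K)).totalDegree
            (-MvPolynomial.monomial (expNeg κ) (1 : K)).totalDegree :=
            MvPolynomial.totalDegree_add _ _
      _ ≤ max (∑ e, (κ e).toNat) (∑ e, (-κ e).toNat) := by
            rw [MvPolynomial.totalDegree_neg,
              MvPolynomial.totalDegree_monomial _ (one_ne_zero (α := K)),
              MvPolynomial.totalDegree_monomial _ (one_ne_zero (α := K)), hsp, hsn]
  · have hmem1 : expPos κ ∈ (MvPolynomial.monomial (expPos κ) (1 : K)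
        - MvPolynomial.monomial (expNeg κ) (1 : K)).support := by
      rw [MvPolynomial.mem_support_iff, MvPolynomial.coeff_sub, MvPolynomial.coeff_monomial,
        MvPolynomial.coeff_monomial, if_pos rfl, if_neg (Ne.symm hne)]
      simp
    have hmem2 : expNeg κ ∈ (MvPolynomial.monomial (expPos κ) (1 : K)
        - MvPolynomial.monomial (expNeg κ) (1 : K)).support := by
      rw [MvPolynomial.mem_support_iff, MvPolynomial.coeff_sub, MvPolynomial.coeff_monomial,
        MvPolynomial.coeff_monomial, if_neg hne, if_pos rfl]
      simp
    have hle1 := MvPolynomial.le_totalDegree hmem1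
    have hle2 := MvPolynomial.le_totalDegree hmem2
    rw [hsp] at hle1
    rw [hsn] at hle2
    exact max_le hle1 hle2

lemma binom_step (K : Type*) [Field K] (z : Fin n → Fin k)
    (γ δ : Edge n → ℤ) (hδ : δ ∈ MSet z)
    (hcond : ∀ e, δ e = 0 ∨ (δ e = 1 ∧ 1 ≤ γ e) ∨ (δ e = -1 ∧ 0 ≤ γ e))
    (hsum : ∑ e, δ e = 0) :
    ∃ f' ∈ Ideal.span {f : MvPolynomial (Edge n) K | ∃ δ' ∈ MSet z, f = binom K δ'},
      binom K γ = f' + binom K (fun e => γ e - δ e) ∧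
      (∑ e, (γ e - δ e).toNat) = (∑ e, (γ e).toNat) ∧
      (∑ e, (-(γ e - δ e)).toNat) = (∑ e, (-γ e).toNat) := by
  classical
  set μ : Edge n →₀ ℕ := Finsupp.equivFunOnFinite.symm (fun e => (γ e).toNat - (δ e).toNat)
    with hμ
  have hμa : ∀ e, μ e = (γ e).toNat - (δ e).toNat := by
    intro e; rw [hμ, Finsupp.coe_equivFunOnFinite_symm]
  have h1 : expPos γ = μ + expPos δ := by
    ext e
    rw [Finsupp.add_apply, hμa, expPos_apply, expPos_apply]
    rcases hcond e with h | ⟨h, h'⟩ | ⟨h, h'⟩ <;> omega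
  have h2 : expPos (fun e => γ e - δ e) = μ + expNeg δ := by
    ext e
    rw [Finsupp.add_apply, hμa, expPos_apply, expNeg_apply]
    rcases hcond e with h | ⟨h, h'⟩ | ⟨h, h'⟩ <;> omega
  have h3 : expNeg (fun e => γ e - δ e) = expNeg γ := by
    ext e
    rw [expNeg_apply, expNeg_apply]
    rcases hcond e with h | ⟨h, h'⟩ | ⟨h, h'⟩ <;> omega
  refine ⟨MvPolynomial.monomial μ (1 : K) * binom K δ,
    Ideal.mul_mem_left _ _ (Ideal.subset_span ⟨δ, hδ, rfl⟩), ?_, ?_, ?_⟩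
  · unfold binom
    rw [h1, h2, h3, mul_sub, MvPolynomial.monomial_mul, MvPolynomial.monomial_mul, one_mul]
    ring
  · have hpt : ∀ e, ((γ e - δ e).toNat : ℤ) = ((γ e).toNat : ℤ) - δ e := by
      intro e; rcases hcond e with h | ⟨h, h'⟩ | ⟨h, h'⟩ <;> omega
    have hcast : ((∑ e, (γ e - δ e).toNat : ℕ) : ℤ) = ((∑ e, (γ e).toNat : ℕ) : ℤ) := by
      push_cast
      rw [Finset.sum_congr rfl (fun e _ => hpt e), Finset.sum_sub_distrib, hsum, sub_zero]
    exact_mod_cast hcast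
  · refine Finset.sum_congr rfl fun e _ => ?_
    rcases hcond e with h | ⟨h, h'⟩ | ⟨h, h'⟩ <;> omega

end Aux3

/-- For every nonzero `γ ∈ ker_ℤ DC_{n,z}`, the binomial
`f = x^{γ⁺} − x^{γ⁻}` can be written as `f = f' + f''` with `f' ∈ I_{M_{n,z}}`,
`f'' = x^{γ''⁺} − x^{γ''⁻}` with `γ'' ∈ ker_ℤ DC_{n,z}`, `deg f'' = deg f`, and
`γ''` containing a subwalk `u v w` with `z u = z w` whose two edges have opposite signs. -/
theorem exists_rewrite_with_good_subwalk (n k : ℕ) (hn : 0 < n) (hk : 0 < k)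
    (z : Fin n → Fin k) (K : Type*) [Field K]
    (γ : Edge n → ℤ) (hγ : inKer z γ) (hne : γ ≠ 0) :
    ∃ f' ∈ Ideal.span {f : MvPolynomial (Edge n) K | ∃ δ ∈ MSet z, f = binom K δ},
      ∃ γ'' : Edge n → ℤ, inKer z γ'' ∧
        binom K γ = f' + binom K γ'' ∧
        (binom K γ'').totalDegree = (binom K γ).totalDegree ∧
        ∃ u v w : Fin n, z u = z w ∧ ent γ'' u v * ent γ'' v w < 0 := by
  classical
  by_cases hgoal : ∃ u v w : Fin n, z u = z w ∧ ent γ u v * ent γ v w < 0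
  · exact ⟨0, Ideal.zero_mem _, γ, hγ, by rw [zero_add], rfl, hgoal⟩
  push_neg at hgoal
  have N : ∀ u v w : Fin n, z u = z w → 0 ≤ ent γ u v * ent γ v w := hgoal
  have hγne : ∃ e, γ e ≠ 0 := by
    obtain ⟨e0, he0⟩ := Function.ne_iff.mp hne
    exact ⟨e0, by simpa using he0⟩
  -- a negative entry
  obtain ⟨v, w, hvw⟩ : ∃ v w : Fin n, ent γ v w < 0 := by
    obtain ⟨e0, he0⟩ := hγne
    rcases lt_or_gt_of_ne he0 with hlt | hgt
    · exact ⟨e0.1.1, e0.1.2, by rw [ent_val]; exact hlt⟩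
    · have h0 : ∑ x, ent γ e0.1.1 x = 0 := hγ.1 e0.1.1
      have hpos : 0 < ent γ e0.1.1 e0.1.2 := by rw [ent_val]; exact hgt
      obtain ⟨b, hb⟩ := exists_neg_term h0 hpos
      exact ⟨e0.1.1, b, hb⟩
  have hvw_ne : v ≠ w := by
    rintro rfl
    rw [ent_self] at hvw
    exact absurd hvw (lt_irrefl 0)
  -- a positive entry at v
  obtain ⟨a, ha⟩ : ∃ a, 0 < ent γ v a := by
    have h0 : ∑ x, ent γ v x = 0 := hγ.1 v
    exact exists_pos_term h0 hvw
  have hva_ne : v ≠ a := by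
    rintro rfl; rw [ent_self] at ha; exact absurd ha (lt_irrefl 0)
  have hav_ne : a ≠ v := Ne.symm hva_ne
  have hzaw : z a ≠ z w := by
    intro hz
    have hN := N a v w hz
    have h2 := mul_neg_of_pos_of_neg (show 0 < ent γ a v by rw [ent_symm]; exact ha) hvw
    linarith
  have haw_ne : a ≠ w := fun h => hzaw (congrArg z h)
  -- a positive edge in the color class {z v, z w}
  obtain ⟨p, q, hpq_ne, hpq, hzp, hzq⟩ :
      ∃ p q : Fin n, p ≠ q ∧ 0 < ent γ p q ∧ z p = z v ∧ z q = z w := by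
    have h0 : ∑ e : Edge n, (if (z e.1.1 = z v ∧ z e.1.2 = z w) ∨
        (z e.1.1 = z w ∧ z e.1.2 = z v) then γ e else 0) = 0 := hγ.2 (z v) (z w)
    have hterm : (if (z (edg v w hvw_ne).1.1 = z v ∧ z (edg v w hvw_ne).1.2 = z w) ∨
        (z (edg v w hvw_ne).1.1 = z w ∧ z (edg v w hvw_ne).1.2 = z v)
        then γ (edg v w hvw_ne) else 0) < 0 := by
      have hcond : (z (edg v w hvw_ne).1.1 = z v ∧ z (edg v w hvw_ne).1.2 = z w) ∨
          (z (edg v w hvw_ne).1.1 = z w ∧ z (edg v w hvw_ne).1.2 = z v) := by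
        rcases edg_fst hvw_ne with h3 | h3 <;> rw [h3]
        · exact Or.inl ⟨rfl, rfl⟩
        · exact Or.inr ⟨rfl, rfl⟩
      rw [if_pos hcond, ent_edg γ hvw_ne]
      exact hvw
    obtain ⟨e1, he1⟩ := exists_pos_term h0 hterm
    by_cases hc : (z e1.1.1 = z v ∧ z e1.1.2 = z w) ∨ (z e1.1.1 = z w ∧ z e1.1.2 = z v)
    · rw [if_pos hc] at he1
      have hne12 : e1.1.1 ≠ e1.1.2 := ne_of_lt e1.2
      rcases hc with ⟨hc1, hc2⟩ | ⟨hc1, hc2⟩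
      · exact ⟨e1.1.1, e1.1.2, hne12, by rw [ent_val]; exact he1, hc1, hc2⟩
      · exact ⟨e1.1.2, e1.1.1, hne12.symm, by rw [ent_symm, ent_val]; exact he1, hc2, hc1⟩
    · rw [if_neg hc] at he1; exact absurd he1 (lt_irrefl 0)
  -- exclusions
  have hpv_ne : p ≠ v := by
    intro hpv
    have hN := N q v w hzq
    have hq : 0 < ent γ q v := by rw [ent_symm, ← hpv]; exact hpq
    have h2 := mul_neg_of_pos_of_neg hq hvw
    linarith
  have hqv_ne : q ≠ v := by
    intro hqv
    have hzpw : z p = z w := by rw [hzp, ← hqv]; exact hzq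
    have hN := N p v w hzpw
    have hp : 0 < ent γ p v := by rw [← hqv]; exact hpq
    have h2 := mul_neg_of_pos_of_neg hp hvw
    linarith
  have hqa_ne : q ≠ a := by
    intro h
    apply hzaw
    rw [← h]; exact hzq
  have hvq0 : 0 ≤ ent γ v q := by
    by_contra hcon
    push_neg at hcon
    have hN := N p q v hzp
    have h2 := mul_neg_of_pos_of_neg hpq (show ent γ q v < 0 by rw [ent_symm]; exact hcon)
    linarith
  have hqw_ne : q ≠ w := by
    intro h
    rw [h] at hvq0
    linarith
  by_cases hpa : p = a
  · -- subcase: the class edge touches a; move the negative side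
    have hpaq : 0 < ent γ a q := by rw [← hpa]; exact hpq
    have hzav : z a = z v := by rw [← hpa]; exact hzp
    obtain ⟨r, hr⟩ : ∃ r, ent γ a r < 0 := by
      have h0 : ∑ x, ent γ a x = 0 := hγ.1 a
      have hpos : 0 < ent γ a v := by rw [ent_symm]; exact ha
      exact exists_neg_term h0 hpos
    have hra_ne : r ≠ a := by
      rintro rfl; rw [ent_self] at hr; exact absurd hr (lt_irrefl 0)
    have hzrv : z r ≠ z v := by
      intro hzr
      have hN := N v a r hzr.symm
      have h2 := mul_neg_of_pos_of_neg ha hr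
      linarith
    have hzrw : z r ≠ z w := by
      intro hzr
      have hN := N q a r (hzq.trans hzr.symm)
      have h2 := mul_neg_of_pos_of_neg (show 0 < ent γ q a by rw [ent_symm]; exact hpaq) hr
      linarith
    have hrv_ne : r ≠ v := fun h => hzrv (congrArg z h)
    have hrw_ne : r ≠ w := fun h => hzrw (congrArg z h)
    have hqr_ne : q ≠ r := fun h => hzrw (by rw [← h]; exact hzq)
    have hrv0 : ent γ r v ≤ 0 := by
      by_contra hcon
      push_neg at hcon
      have hN := N v r a hzav.symm
      have h2 := mul_neg_of_pos_of_neg (show 0 < ent γ v r by rw [ent_symm]; exact hcon)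
        (show ent γ r a < 0 by rw [ent_symm]; exact hr)
      linarith
    have haw0 : ent γ a w ≤ 0 := by
      by_contra hcon
      push_neg at hcon
      have hN := N a w v hzav
      have h2 := mul_neg_of_pos_of_neg hcon
        (show ent γ w v < 0 by rw [ent_symm]; exact hvw)
      linarith
    have hδM : mv r a v w ∈ MSet z :=
      mv_mem z hra_ne hvw_ne hrv_ne haw_ne hrw_ne hav_ne hzav
    -- edge distinctness
    have n12 : edg r a hra_ne ≠ edg v w hvw_ne :=
      edg_ne (by rintro (⟨h, _⟩ | ⟨h, _⟩); exacts [hrv_ne h, hrw_ne h])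
    have n13 : edg r a hra_ne ≠ edg r v hrv_ne :=
      edg_ne (by rintro (⟨_, h⟩ | ⟨h, _⟩); exacts [hav_ne h, hrv_ne h])
    have n14 : edg r a hra_ne ≠ edg a w haw_ne :=
      edg_ne (by rintro (⟨h, _⟩ | ⟨h, _⟩); exacts [hra_ne h, hrw_ne h])
    have n23 : edg v w hvw_ne ≠ edg r v hrv_ne :=
      edg_ne (by rintro (⟨h, _⟩ | ⟨_, h⟩); exacts [hrv_ne h.symm, hrw_ne h.symm])
    have n24 : edg v w hvw_ne ≠ edg a w haw_ne :=
      edg_ne (by rintro (⟨h, _⟩ | ⟨h, _⟩); exacts [hav_ne h.symm, hvw_ne h])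
    have n34 : edg r v hrv_ne ≠ edg a w haw_ne :=
      edg_ne (by rintro (⟨h, _⟩ | ⟨h, _⟩); exacts [hra_ne h, hrw_ne h])
    have hcond : ∀ e, mv r a v w e = 0 ∨ (mv r a v w e = 1 ∧ 1 ≤ -γ e) ∨
        (mv r a v w e = -1 ∧ 0 ≤ -γ e) := by
      intro e
      simp only [mv]
      rw [chi_apply hra_ne e, chi_apply hvw_ne e, chi_apply hrv_ne e, chi_apply haw_ne e]
      by_cases h1 : e = edg r a hra_ne
      · subst h1
        rw [if_pos rfl, if_neg n12, if_neg n13, if_neg n14]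
        refine Or.inr (Or.inl ⟨by norm_num, ?_⟩)
        rw [ent_edg γ hra_ne, ent_symm γ r a]
        omega
      rw [if_neg h1]
      by_cases h2 : e = edg v w hvw_ne
      · subst h2
        rw [if_pos rfl, if_neg n23, if_neg n24]
        refine Or.inr (Or.inl ⟨by norm_num, ?_⟩)
        rw [ent_edg γ hvw_ne]
        omega
      rw [if_neg h2]
      by_cases h3 : e = edg r v hrv_ne
      · subst h3
        rw [if_pos rfl, if_neg n34]
        refine Or.inr (Or.inr ⟨by norm_num, ?_⟩)
        rw [ent_edg γ hrv_ne]
        omega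
      rw [if_neg h3]
      by_cases h4 : e = edg a w haw_ne
      · subst h4
        rw [if_pos rfl]
        refine Or.inr (Or.inr ⟨by norm_num, ?_⟩)
        rw [ent_edg γ haw_ne]
        omega
      rw [if_neg h4]
      exact Or.inl (by norm_num)
    obtain ⟨f0, hf0mem, heq0, hSp0, hSn0⟩ :=
      binom_step K z (fun e => -γ e) (mv r a v w) hδM hcond
        (sum_mv hra_ne hvw_ne hrv_ne haw_ne)
    have hbneg1 : binom K (fun e => -γ e) = -binom K γ := binom_neg K γ
    have hbneg2 : binom K (fun e => -γ e - mv r a v w e)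
        = -binom K (fun e => γ e + mv r a v w e) := by
      have hfe : (fun e => -γ e - mv r a v w e)
          = (fun e => -(γ e + mv r a v w e)) := by funext e; ring
      rw [hfe]
      exact binom_neg K (fun e => γ e + mv r a v w e)
    rw [hbneg1, hbneg2] at heq0
    -- entries of the move
    have hδaq : ent (mv r a v w) a q = 0 := by
      rw [ent_mv, ent_chi hra_ne, ent_chi hvw_ne, ent_chi hrv_ne, ent_chi haw_ne]
      rw [if_neg (by rintro (⟨h, _⟩ | ⟨_, h⟩); exacts [hra_ne h.symm, hqr_ne h]),
        if_neg (by rintro (⟨h, _⟩ | ⟨h, _⟩); exacts [hav_ne h, haw_ne h]),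
        if_neg (by rintro (⟨h, _⟩ | ⟨h, _⟩); exacts [hra_ne h.symm, hav_ne h]),
        if_neg (by rintro (⟨_, h⟩ | ⟨h, _⟩); exacts [hqw_ne h, haw_ne h])]
      norm_num
    have hδaw : ent (mv r a v w) a w = -1 := by
      rw [ent_mv, ent_chi hra_ne, ent_chi hvw_ne, ent_chi hrv_ne, ent_chi haw_ne]
      rw [if_neg (by rintro (⟨h, _⟩ | ⟨_, h⟩); exacts [hra_ne h.symm, hrw_ne h.symm]),
        if_neg (by rintro (⟨h, _⟩ | ⟨h, _⟩); exacts [hav_ne h, haw_ne h]),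
        if_neg (by rintro (⟨h, _⟩ | ⟨h, _⟩); exacts [hra_ne h.symm, hav_ne h]),
        if_pos (Or.inl ⟨rfl, rfl⟩)]
      norm_num
    have hγ''ne : ∃ e, (γ e + mv r a v w e) ≠ 0 := by
      refine ⟨edg a w haw_ne, ?_⟩
      rw [ent_edg γ haw_ne, ent_edg (mv r a v w) haw_ne, hδaw]
      omega
    have hSp' : (∑ e, (γ e + mv r a v w e).toNat) = ∑ e, (γ e).toNat := by
      calc (∑ e, (γ e + mv r a v w e).toNat)
          = ∑ e, (-(-γ e - mv r a v w e)).toNat :=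
            Finset.sum_congr rfl fun e _ => by congr 1; ring
        _ = ∑ e, (-(-γ e)).toNat := hSn0
        _ = ∑ e, (γ e).toNat := Finset.sum_congr rfl fun e _ => by rw [neg_neg]
    have hSn' : (∑ e, (-(γ e + mv r a v w e)).toNat) = ∑ e, (-γ e).toNat := by
      calc (∑ e, (-(γ e + mv r a v w e)).toNat)
          = ∑ e, (-γ e - mv r a v w e).toNat :=
            Finset.sum_congr rfl fun e _ => by congr 1; ring
        _ = ∑ e, (-γ e).toNat := hSp0
    refine ⟨-f0, neg_mem hf0mem, (fun e => γ e + mv r a v w e), inKer_add hγ hδM.1,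
      by linear_combination -heq0, ?_, ?_⟩
    · have hd1 := totalDegree_binom K (fun e => γ e + mv r a v w e) hγ''ne
      have hd2 := totalDegree_binom K γ hγne
      rw [hd1, hd2]
      simp only [hSp', hSn']
    · refine ⟨q, a, w, hzq, ?_⟩
      have h1 : 0 < ent (fun e => γ e + mv r a v w e) q a := by
        rw [ent_symm, ent_add, hδaq, add_zero]
        exact hpaq
      have h2 : ent (fun e => γ e + mv r a v w e) a w < 0 := by
        rw [ent_add, hδaw]
        omega
      exact mul_neg_of_pos_of_neg h1 h2
  · -- main case: swap on the positive side
    have hap_ne : a ≠ p := fun h => hpa h.symm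
    have hvq_ne : v ≠ q := Ne.symm hqv_ne
    have haq_ne : a ≠ q := Ne.symm hqa_ne
    have hvp_ne : v ≠ p := Ne.symm hpv_ne
    have hap0 : 0 ≤ ent γ a p := by
      by_contra hcon
      push_neg at hcon
      have hN := N v a p hzp.symm
      have h2 := mul_neg_of_pos_of_neg ha hcon
      linarith
    have hδM : mv a v p q ∈ MSet z :=
      mv_mem z hav_ne hpq_ne hap_ne hvq_ne haq_ne hvp_ne hzp.symm
    have n12 : edg a v hav_ne ≠ edg p q hpq_ne :=
      edg_ne (by rintro (⟨h, _⟩ | ⟨h, _⟩); exacts [hap_ne h, haq_ne h])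
    have n13 : edg a v hav_ne ≠ edg a p hap_ne :=
      edg_ne (by rintro (⟨_, h⟩ | ⟨h, _⟩); exacts [hvp_ne h, hap_ne h])
    have n14 : edg a v hav_ne ≠ edg v q hvq_ne :=
      edg_ne (by rintro (⟨h, _⟩ | ⟨h, _⟩); exacts [hav_ne h, haq_ne h])
    have n23 : edg p q hpq_ne ≠ edg a p hap_ne :=
      edg_ne (by rintro (⟨h, _⟩ | ⟨_, h⟩); exacts [hpa h, hqa_ne h])
    have n24 : edg p q hpq_ne ≠ edg v q hvq_ne :=
      edg_ne (by rintro (⟨h, _⟩ | ⟨h, _⟩); exacts [hpv_ne h, hpq_ne h])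
    have n34 : edg a p hap_ne ≠ edg v q hvq_ne :=
      edg_ne (by rintro (⟨h, _⟩ | ⟨h, _⟩); exacts [hav_ne h, haq_ne h])
    have hcond : ∀ e, mv a v p q e = 0 ∨ (mv a v p q e = 1 ∧ 1 ≤ γ e) ∨
        (mv a v p q e = -1 ∧ 0 ≤ γ e) := by
      intro e
      simp only [mv]
      rw [chi_apply hav_ne e, chi_apply hpq_ne e, chi_apply hap_ne e, chi_apply hvq_ne e]
      by_cases h1 : e = edg a v hav_ne
      · subst h1
        rw [if_pos rfl, if_neg n12, if_neg n13, if_neg n14]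
        refine Or.inr (Or.inl ⟨by norm_num, ?_⟩)
        rw [ent_edg γ hav_ne, ent_symm γ a v]
        omega
      rw [if_neg h1]
      by_cases h2 : e = edg p q hpq_ne
      · subst h2
        rw [if_pos rfl, if_neg n23, if_neg n24]
        refine Or.inr (Or.inl ⟨by norm_num, ?_⟩)
        rw [ent_edg γ hpq_ne]
        omega
      rw [if_neg h2]
      by_cases h3 : e = edg a p hap_ne
      · subst h3
        rw [if_pos rfl, if_neg n34]
        refine Or.inr (Or.inr ⟨by norm_num, ?_⟩)
        rw [ent_edg γ hap_ne]
        omega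
      rw [if_neg h3]
      by_cases h4 : e = edg v q hvq_ne
      · subst h4
        rw [if_pos rfl]
        refine Or.inr (Or.inr ⟨by norm_num, ?_⟩)
        rw [ent_edg γ hvq_ne]
        omega
      rw [if_neg h4]
      exact Or.inl (by norm_num)
    obtain ⟨f', hf'mem, heq, hSp, hSn⟩ :=
      binom_step K z γ (mv a v p q) hδM hcond (sum_mv hav_ne hpq_ne hap_ne hvq_ne)
    have hδvq : ent (mv a v p q) v q = -1 := by
      rw [ent_mv, ent_chi hav_ne, ent_chi hpq_ne, ent_chi hap_ne, ent_chi hvq_ne]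
      rw [if_neg (by rintro (⟨h, _⟩ | ⟨_, h⟩); exacts [hva_ne h, hqa_ne h]),
        if_neg (by rintro (⟨h, _⟩ | ⟨h, _⟩); exacts [hvp_ne h, hvq_ne h]),
        if_neg (by rintro (⟨h, _⟩ | ⟨h, _⟩); exacts [hva_ne h, hvp_ne h]),
        if_pos (Or.inl ⟨rfl, rfl⟩)]
      norm_num
    have hδvw : ent (mv a v p q) v w = 0 := by
      rw [ent_mv, ent_chi hav_ne, ent_chi hpq_ne, ent_chi hap_ne, ent_chi hvq_ne]
      rw [if_neg (by rintro (⟨h, _⟩ | ⟨_, h⟩); exacts [hva_ne h, haw_ne h.symm]),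
        if_neg (by rintro (⟨h, _⟩ | ⟨h, _⟩); exacts [hvp_ne h, hvq_ne h]),
        if_neg (by rintro (⟨h, _⟩ | ⟨h, _⟩); exacts [hva_ne h, hvp_ne h]),
        if_neg (by rintro (⟨_, h⟩ | ⟨h, _⟩); exacts [hqw_ne h.symm, hvq_ne h])]
      norm_num
    have hγ''ne : ∃ e, (γ e - mv a v p q e) ≠ 0 := by
      refine ⟨edg v q hvq_ne, ?_⟩
      rw [ent_edg γ hvq_ne, ent_edg (mv a v p q) hvq_ne, hδvq]
      omega
    refine ⟨f', hf'mem, (fun e => γ e - mv a v p q e), inKer_sub hγ hδM.1, heq, ?_, ?_⟩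
    · have hd1 := totalDegree_binom K (fun e => γ e - mv a v p q e) hγ''ne
      have hd2 := totalDegree_binom K γ hγne
      rw [hd1, hd2]
      simp only [hSp, hSn]
    · refine ⟨q, v, w, hzq, ?_⟩
      have h1 : 0 < ent (fun e => γ e - mv a v p q e) q v := by
        rw [ent_symm, ent_sub, hδvq]
        omega
      have h2 : ent (fun e => γ e - mv a v p q e) v w < 0 := by
        rw [ent_sub, hδvw]
        omega
      exact mul_neg_of_pos_of_neg h1 h2
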